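/- If I is an analytic ideal on ℕ and (α_n) is a strictly decreasing sequence in (0,1/2] converging to 0, then the ideal conv(I,(α_n)) on [0,1] ∩ ℚ is analytic as a subset of the Cantor space 2^{[0,1]∩ℚ}. -/

import Mathlib

open Filter Topology Set

/-- The upper-density submeasure `φ(A) = sup_n |A ∩ [0,n]| / (n+1)`. -/
noncomputable def phi (A : Set ℕ) : ℝ :=
  ⨆ n : ℕ, ((A ∩ Set.Iic n).ncard : ℝ) / (n + 1)

/-- The ideal of asymptotic density zero sets. -/
def densityZero : Set (Set ℕ) :=
  {A | Tendsto (fun n : ℕ => ((A ∩ Set.Iic n).ncard : ℝ) / (n + 1)) atTop (𝓝 0)}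

/-- `I` is an ideal on `X` (containing all finite sets, proper). -/
def IsIdeal {X : Type*} (I : Set (Set X)) : Prop :=
  (∀ A ∈ I, ∀ B, B ⊆ A → B ∈ I) ∧ (∀ A ∈ I, ∀ B ∈ I, A ∪ B ∈ I) ∧
    (∀ A : Set X, A.Finite → A ∈ I) ∧ Set.univ ∉ I

/-- `J` is a P⁺-ideal. -/
def IsPPlus {X : Type*} (J : Set (Set X)) : Prop :=
  ∀ A : ℕ → Set X, (∀ n, A (n + 1) ⊆ A n) → (∀ n, A n ∉ J) →
    ∃ B ∉ J, ∀ n, (B \ A n).Finite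

/-- Katětov order. -/
def KatLE {X Y : Type*} (I : Set (Set X)) (J : Set (Set Y)) : Prop :=
  ∃ f : Y → X, ∀ A ∈ I, f ⁻¹' A ∈ J

/-- membership in the class `S` of strictly decreasing null sequences in `(0,1/2]`. -/
def memS (α : ℕ → ℝ) : Prop :=
  (∀ n, 0 < α n) ∧ (∀ n, α n ≤ 1 / 2) ∧ StrictAnti α ∧ Tendsto α atTop (𝓝 0)

/-- The underlying countable set `[0,1] ∩ ℚ`. -/
abbrev Q01 : Type := ↥(Set.Icc (0 : ℚ) 1)

/-- The real number corresponding to a point of `[0,1] ∩ ℚ`. -/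
noncomputable def qr (q : Q01) : ℝ := ((q : ℚ) : ℝ)

/-- The set `S ⊆ [0,1]∩ℚ` converges to `x ∈ ℝ`. -/
def ConvTo (S : Set Q01) (x : ℝ) : Prop :=
  ∀ ε > (0 : ℝ), {q ∈ S | ε ≤ |qr q - x|}.Finite

/-- `S` converges `I`-quickly with respect to `α` to the point `x`. -/
def IQuickTo (I : Set (Set ℕ)) (α : ℕ → ℝ) (S : Set Q01) (x : ℝ) : Prop :=
  ConvTo S x ∧
    {n : ℕ | ∃ q ∈ S, α (n + 1) ≤ |qr q - x| ∧ |qr q - x| < α n} ∈ I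

/-- `S` converges `I`-quickly with respect to `α`. -/
def IQuick (I : Set (Set ℕ)) (α : ℕ → ℝ) (S : Set Q01) : Prop :=
  ∃ x ∈ Set.Icc (0 : ℝ) 1, IQuickTo I α S x

/-- The ideal `conv(I,(α_n))` on `[0,1] ∩ ℚ`. -/
def convQI (I : Set (Set ℕ)) (α : ℕ → ℝ) : Set (Set Q01) :=
  {A | ∃ F : Finset (Set Q01), (∀ S ∈ F, IQuick I α S) ∧ A ⊆ ⋃₀ ↑F}

/-- The ideal `conv` on `[0,1] ∩ ℚ` generated by convergent sequences. -/
def convIdeal : Set (Set Q01) :=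
  {A | ∃ F : Finset (Set Q01),
    (∀ S ∈ F, ∃ x ∈ Set.Icc (0 : ℝ) 1, ConvTo S x) ∧ A ⊆ ⋃₀ ↑F}

/-- Identify a point of Cantor space `2^X` with a subset of `X`. -/
def toSet {X : Type*} (f : X → Bool) : Set X := {x | f x = true}

/-- `Σ⁰ₙ` sets of a topological space: `IsSigma0 1 = open`,
`IsSigma0 (n+1)` = countable unions of complements of `Σ⁰ₙ` sets. -/
def IsSigma0 {X : Type*} [TopologicalSpace X] : ℕ → Set X → Prop
  | 0, _ => False
  | 1, S => IsOpen S
  | (n + 2), S => ∃ f : ℕ → Set X, (∀ k, IsSigma0 (n + 1) (f k)ᶜ) ∧ S = ⋃ k, f k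



/-! ### Auxiliary material for the proof of `convQI_analytic` -/

section Aux

open MeasureTheory

/-- The parameter space for `k` generating sequences. -/
abbrev Xk (k : ℕ) : Type :=
  (Q01 → Bool) × (Fin k → Q01 → Bool) × (Fin k → ℝ) × (Fin k → ℕ → Bool)

instance borelXk (k : ℕ) : BorelSpace (Xk k) := by
  have h1 : BorelSpace ((Fin k → ℝ) × (Fin k → ℕ → Bool)) := Prod.borelSpace
  have h2 : BorelSpace ((Fin k → Q01 → Bool) × ((Fin k → ℝ) × (Fin k → ℕ → Bool))) :=
    Prod.borelSpace
  exact Prod.borelSpace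

instance polishXk (k : ℕ) : PolishSpace (Xk k) := by
  have h1 : TopologicalSpace.SeparableSpace (Xk k) := inferInstance
  have h2 : TopologicalSpace.IsCompletelyMetrizableSpace (Xk k) := inferInstance
  exact instPolishSpaceOfSeparableSpaceOfIsCompletelyMetrizableSpace

lemma meas_fXk (k : ℕ) (q : Q01) : Measurable fun p : Xk k => p.1 q :=
  (measurable_pi_apply q).comp measurable_fst

lemma meas_SXk (k : ℕ) (i : Fin k) (q : Q01) : Measurable fun p : Xk k => p.2.1 i q :=
  (measurable_pi_apply q).comp ((measurable_pi_apply i).comp (measurable_fst.comp measurable_snd))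

lemma meas_xXk (k : ℕ) (i : Fin k) : Measurable fun p : Xk k => p.2.2.1 i :=
  (measurable_pi_apply i).comp (measurable_fst.comp (measurable_snd.comp measurable_snd))

lemma meas_gXk (k : ℕ) (i : Fin k) (n : ℕ) : Measurable fun p : Xk k => p.2.2.2 i n :=
  (measurable_pi_apply n).comp
    ((measurable_pi_apply i).comp (measurable_snd.comp (measurable_snd.comp measurable_snd)))

lemma cont_gXk (k : ℕ) (i : Fin k) : Continuous fun p : Xk k => p.2.2.2 i :=
  (continuous_apply i).comp (continuous_snd.comp (continuous_snd.comp continuous_snd))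

lemma measurableSet_imp {X : Type*} [MeasurableSpace X] {P Q : X → Prop}
    (hP : MeasurableSet {p | P p}) (hQ : MeasurableSet {p | Q p}) :
    MeasurableSet {p | P p → Q p} := by
  have : {p | P p → Q p} = {p | P p}ᶜ ∪ {p | Q p} := by
    ext p; simp [imp_iff_not_or]
  rw [this]; exact hP.compl.union hQ

lemma measurableSet_iffSet {X : Type*} [MeasurableSpace X] {P Q : X → Prop}
    (hP : MeasurableSet {p | P p}) (hQ : MeasurableSet {p | Q p}) :
    MeasurableSet {p | P p ↔ Q p} := by
  have : {p | P p ↔ Q p} = ({p | P p} ∩ {p | Q p}) ∪ ({p | P p}ᶜ ∩ {p | Q p}ᶜ) := by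
    ext p; by_cases h : P p <;> simp [h, Set.mem_union]
  rw [this]; exact (hP.inter hQ).union (hP.compl.inter hQ.compl)

/-- The Borel part of the witness set. -/
def Mset (α : ℕ → ℝ) (k : ℕ) : Set (Xk k) :=
  {p | (∀ q, p.1 q = true → ∃ i, p.2.1 i q = true) ∧
       (∀ i, p.2.2.1 i ∈ Set.Icc (0 : ℝ) 1) ∧
       (∀ (i : Fin k) (m : ℕ), ∃ F : Finset Q01, ∀ q, p.2.1 i q = true →
          1 / (m + 1 : ℝ) ≤ |qr q - p.2.2.1 i| → q ∈ F) ∧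
       (∀ (i : Fin k) (n : ℕ), p.2.2.2 i n = true ↔
          ∃ q, p.2.1 i q = true ∧ α (n + 1) ≤ |qr q - p.2.2.1 i| ∧
            |qr q - p.2.2.1 i| < α n)}

lemma meas_abs_sub (k : ℕ) (i : Fin k) (q : Q01) :
    Measurable fun p : Xk k => |qr q - p.2.2.1 i| :=
  (measurable_const.sub (meas_xXk k i)).abs

lemma meas_Mset (α : ℕ → ℝ) (k : ℕ) : MeasurableSet (Mset α k) := by
  have h1 : MeasurableSet {p : Xk k | ∀ q, p.1 q = true → ∃ i, p.2.1 i q = true} := by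
    rw [Set.setOf_forall]
    refine MeasurableSet.iInter fun q => measurableSet_imp ?_ ?_
    · exact meas_fXk k q (measurableSet_singleton true)
    · rw [Set.setOf_exists]
      exact MeasurableSet.iUnion fun i => meas_SXk k i q (measurableSet_singleton true)
  have h2 : MeasurableSet {p : Xk k | ∀ i, p.2.2.1 i ∈ Set.Icc (0 : ℝ) 1} := by
    rw [Set.setOf_forall]
    exact MeasurableSet.iInter fun i => meas_xXk k i measurableSet_Icc
  have h3 : MeasurableSet {p : Xk k | ∀ (i : Fin k) (m : ℕ), ∃ F : Finset Q01,
      ∀ q, p.2.1 i q = true → 1 / (m + 1 : ℝ) ≤ |qr q - p.2.2.1 i| → q ∈ F} := by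
    rw [Set.setOf_forall]
    refine MeasurableSet.iInter fun i => ?_
    rw [Set.setOf_forall]
    refine MeasurableSet.iInter fun m => ?_
    rw [Set.setOf_exists]
    refine MeasurableSet.iUnion fun F => ?_
    rw [Set.setOf_forall]
    refine MeasurableSet.iInter fun q => measurableSet_imp ?_ (measurableSet_imp ?_ ?_)
    · exact meas_SXk k i q (measurableSet_singleton true)
    · exact meas_abs_sub k i q measurableSet_Ici
    · exact MeasurableSet.const _
  have h4 : MeasurableSet {p : Xk k | ∀ (i : Fin k) (n : ℕ), p.2.2.2 i n = true ↔
      ∃ q, p.2.1 i q = true ∧ α (n + 1) ≤ |qr q - p.2.2.1 i| ∧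
        |qr q - p.2.2.1 i| < α n} := by
    rw [Set.setOf_forall]
    refine MeasurableSet.iInter fun i => ?_
    rw [Set.setOf_forall]
    refine MeasurableSet.iInter fun n => measurableSet_iffSet ?_ ?_
    · exact meas_gXk k i n (measurableSet_singleton true)
    · rw [Set.setOf_exists]
      refine MeasurableSet.iUnion fun q => ?_
      have : {p : Xk k | p.2.1 i q = true ∧ α (n + 1) ≤ |qr q - p.2.2.1 i| ∧
          |qr q - p.2.2.1 i| < α n} =
          {p : Xk k | p.2.1 i q = true} ∩
            ({p : Xk k | α (n + 1) ≤ |qr q - p.2.2.1 i|} ∩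
              {p : Xk k | |qr q - p.2.2.1 i| < α n}) := by
        ext p; simp [Set.mem_inter_iff]
      rw [this]
      exact (meas_SXk k i q (measurableSet_singleton true)).inter
        ((meas_abs_sub k i q measurableSet_Ici).inter (meas_abs_sub k i q measurableSet_Iio))
  have hM : Mset α k = {p : Xk k | ∀ q, p.1 q = true → ∃ i, p.2.1 i q = true} ∩
      ({p : Xk k | ∀ i, p.2.2.1 i ∈ Set.Icc (0 : ℝ) 1} ∩
        ({p : Xk k | ∀ (i : Fin k) (m : ℕ), ∃ F : Finset Q01,
            ∀ q, p.2.1 i q = true → 1 / (m + 1 : ℝ) ≤ |qr q - p.2.2.1 i| → q ∈ F} ∩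
          {p : Xk k | ∀ (i : Fin k) (n : ℕ), p.2.2.2 i n = true ↔
            ∃ q, p.2.1 i q = true ∧ α (n + 1) ≤ |qr q - p.2.2.1 i| ∧
              |qr q - p.2.2.1 i| < α n})) := by
    ext p; simp only [Mset, Set.mem_setOf_eq, Set.mem_inter_iff]
  rw [hM]
  exact h1.inter (h2.inter (h3.inter h4))

/-- The full witness family: `famS I α k 0` is the Borel part, and
`famS I α k (j+1)` demands that the `j`-th trace set belongs to `I`. -/
def famS (I : Set (Set ℕ)) (α : ℕ → ℝ) (k : ℕ) : ℕ → Set (Xk k)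
  | 0 => Mset α k
  | (j + 1) =>
    if h : j < k then (fun p : Xk k => p.2.2.2 ⟨j, h⟩) ⁻¹' {g | toSet g ∈ I}
    else Set.univ

lemma analytic_famS (I : Set (Set ℕ)) (α : ℕ → ℝ) (k : ℕ)
    (hIa : AnalyticSet {f : ℕ → Bool | toSet f ∈ I}) (j : ℕ) :
    AnalyticSet (famS I α k j) := by
  match j with
  | 0 => exact (meas_Mset α k).analyticSet
  | (j + 1) =>
    rw [famS]
    split
    · exact hIa.preimage (cont_gXk k _)
    · exact MeasurableSet.univ.analyticSet

end Aux

theorem convQI_analytic (I : Set (Set ℕ)) (hI : IsIdeal I)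
    (hIa : MeasureTheory.AnalyticSet {f : ℕ → Bool | toSet f ∈ I})
    (α : ℕ → ℝ) (hα : memS α) :
    MeasureTheory.AnalyticSet {f : Q01 → Bool | toSet f ∈ convQI I α} := by
  classical
  have key : {f : Q01 → Bool | toSet f ∈ convQI I α} =
      ⋃ k : ℕ, (fun p : Xk k => p.1) '' ⋂ j : ℕ, famS I α k j := by
    ext f
    simp only [Set.mem_setOf_eq, Set.mem_iUnion, Set.mem_image]
    constructor
    · rintro ⟨F, hF, hsub⟩
      set e := F.equivFin with he
      have hIQ : ∀ i : Fin F.card, IQuick I α ((e.symm i : {S // S ∈ F}) : Set Q01) :=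
        fun i => hF _ (e.symm i).2
      choose x hx hIQT using hIQ
      have hconv : ∀ i, ConvTo ((e.symm i : {S // S ∈ F}) : Set Q01) (x i) :=
        fun i => (hIQT i).1
      have htr : ∀ i, {n : ℕ | ∃ q ∈ ((e.symm i : {S // S ∈ F}) : Set Q01),
          α (n + 1) ≤ |qr q - x i| ∧ |qr q - x i| < α n} ∈ I := fun i => (hIQT i).2
      set Sf : Fin F.card → Q01 → Bool :=
        fun i q => decide (q ∈ ((e.symm i : {S // S ∈ F}) : Set Q01)) with hSf
      set gf : Fin F.card → ℕ → Bool := fun i n =>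
        decide (∃ q ∈ ((e.symm i : {S // S ∈ F}) : Set Q01),
          α (n + 1) ≤ |qr q - x i| ∧ |qr q - x i| < α n) with hgf
      refine ⟨F.card, ⟨f, Sf, x, gf⟩, Set.mem_iInter.2 fun j => ?_, rfl⟩
      match j with
      | 0 =>
        show (⟨f, Sf, x, gf⟩ : Xk F.card) ∈ Mset α F.card
        refine ⟨?_, hx, ?_, ?_⟩
        · intro q hq
          obtain ⟨S, hSF, hqS⟩ := hsub hq
          refine ⟨e ⟨S, hSF⟩, ?_⟩
          simp only [hSf, Equiv.symm_apply_apply, decide_eq_true_eq]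
          exact hqS
        · intro i m
          have hpos : (0 : ℝ) < 1 / (m + 1 : ℝ) := by positivity
          have hfin := hconv i (1 / (m + 1 : ℝ)) hpos
          refine ⟨hfin.toFinset, fun q hq1 hq2 => ?_⟩
          rw [Set.Finite.mem_toFinset]
          exact ⟨of_decide_eq_true hq1, hq2⟩
        · intro i n
          simp only [hgf, hSf, decide_eq_true_eq]
      | (j + 1) =>
        rw [famS]
        split
        · next h =>
          show toSet (gf ⟨j, h⟩) ∈ I
          have : toSet (gf ⟨j, h⟩) = {n : ℕ | ∃ q ∈ ((e.symm ⟨j, h⟩ : {S // S ∈ F}) : Set Q01),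
              α (n + 1) ≤ |qr q - x ⟨j, h⟩| ∧ |qr q - x ⟨j, h⟩| < α n} := by
            ext n
            simp only [toSet, hgf, Set.mem_setOf_eq, decide_eq_true_eq]
          rw [this]
          exact htr ⟨j, h⟩
        · next h => exact Set.mem_univ _
    · rintro ⟨k, p, hp, rfl⟩
      obtain ⟨hcov, hxI, hfin, hgiff⟩ : p ∈ Mset α k := Set.mem_iInter.1 hp 0
      have hgI : ∀ i : Fin k, toSet (p.2.2.2 i) ∈ I := by
        intro i
        have h2 := Set.mem_iInter.1 hp (i.1 + 1)
        rw [famS, dif_pos i.isLt] at h2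
        exact h2
      refine ⟨Finset.image (fun i => toSet (p.2.1 i)) Finset.univ, ?_, ?_⟩
      · intro S hS
        simp only [Finset.mem_image, Finset.mem_univ, true_and] at hS
        obtain ⟨i, rfl⟩ := hS
        refine ⟨p.2.2.1 i, hxI i, ?_, ?_⟩
        · intro ε hε
          obtain ⟨m, hm⟩ := exists_nat_one_div_lt hε
          obtain ⟨F', hF'⟩ := hfin i m
          refine Set.Finite.subset F'.finite_toSet fun q hq => ?_
          exact Finset.mem_coe.2 (hF' q hq.1 (le_trans hm.le hq.2))
        · have heq : {n : ℕ | ∃ q ∈ toSet (p.2.1 i),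
              α (n + 1) ≤ |qr q - p.2.2.1 i| ∧ |qr q - p.2.2.1 i| < α n} =
              toSet (p.2.2.2 i) := by
            ext n
            constructor
            · rintro ⟨q, hq1, hq2⟩; exact (hgiff i n).2 ⟨q, hq1, hq2⟩
            · intro h; obtain ⟨q, h1, h2⟩ := (hgiff i n).1 h; exact ⟨q, h1, h2⟩
          rw [heq]
          exact hgI i
      · intro q hq
        obtain ⟨i, hi⟩ := hcov q hq
        exact ⟨toSet (p.2.1 i),
          Finset.mem_coe.2 (Finset.mem_image_of_mem _ (Finset.mem_univ i)), hi⟩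
  rw [key]
  exact MeasureTheory.AnalyticSet.iUnion fun k =>
    (MeasureTheory.AnalyticSet.iInter (analytic_famS I α k hIa)).image_of_continuous
      continuous_fst
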